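/- For integers n ≥ 2 and d ≥ n, with λ_m(d,k) the coefficients of d·∏_{j=1}^{k-1}(jX+(d-2j)), the degree formula N_{n+1}(n,d) := ∑_{m=n-1}^{n} λ_m(d,n+1)·(binom(m,n-1) − binom(m,n)) equals d²·∑_{i=1}^{n} n!/i − d·(n+1)!. -/

import Mathlib

open Polynomial Finset

/-- `P_{d,k}(X) = d·∏_{j=1}^{k-1}(jX + (d-2j))` in `ℤ[X]`; its coefficients are `λ_m(d,k)`. -/
noncomputable def flexPoly (d : ℤ) (k : ℕ) : Polynomial ℤ :=
  Polynomial.C d * ∏ j ∈ Finset.Icc 1 (k - 1), (Polynomial.C (j : ℤ) * Polynomial.X + Polynomial.C (d - 2 * j))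

/-- `N_k(n,d) = ∑_{m=n-1}^{k-1} λ_m(d,k)·(binom(m,n-1) − binom(m,n))`. -/
noncomputable def degFlex (n : ℕ) (d : ℤ) (k : ℕ) : ℤ :=
  ∑ m ∈ Finset.Icc (n - 1) (k - 1),
    (flexPoly d k).coeff m * ((m.choose (n - 1) : ℤ) - m.choose n)

noncomputable def Qaux (d : ℤ) (k : ℕ) : Polynomial ℤ :=
  ∏ j ∈ Finset.Icc 1 k, (Polynomial.C (j : ℤ) * Polynomial.X + Polynomial.C (d - 2 * j))

noncomputable def Taux (k : ℕ) : ℤ :=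
  ∑ i ∈ Finset.Icc 1 k, ((k.factorial / i : ℕ) : ℤ)

lemma Qaux_succ (d : ℤ) (k : ℕ) :
    Qaux d (k+1) = Qaux d k * (Polynomial.C ((k+1 : ℕ) : ℤ) * Polynomial.X
      + Polynomial.C (d - 2 * (k+1 : ℕ))) := by
  unfold Qaux
  rw [← Finset.prod_Icc_succ_top (by omega : 1 ≤ k+1)]

lemma coeff_mul_linear (p : Polynomial ℤ) (a b : ℤ) (m : ℕ) :
    (p * (Polynomial.C a * Polynomial.X + Polynomial.C b)).coeff (m+1)
      = a * p.coeff m + b * p.coeff (m+1) := by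
  rw [mul_add, coeff_add, ← mul_assoc, coeff_mul_X, coeff_mul_C, coeff_mul_C]
  ring

lemma Qaux_natDegree_le (d : ℤ) (k : ℕ) : (Qaux d k).natDegree ≤ k := by
  unfold Qaux
  refine le_trans (Polynomial.natDegree_prod_le _ _) ?_
  refine le_trans (Finset.sum_le_card_nsmul _ _ 1 ?_) ?_
  · intro j hj
    exact Polynomial.natDegree_linear_le
  · simp [Nat.card_Icc]

lemma Qaux_coeff_top (d : ℤ) (k : ℕ) :
    (Qaux d k).coeff k = (k.factorial : ℤ) := by
  induction k with
  | zero => simp [Qaux]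
  | succ k ih =>
    rw [Qaux_succ, coeff_mul_linear, ih,
      Polynomial.coeff_eq_zero_of_natDegree_lt
        (lt_of_le_of_lt (Qaux_natDegree_le d k) (by omega))]
    rw [Nat.factorial_succ]
    push_cast
    ring

lemma Taux_succ (k : ℕ) : Taux (k+1) = (k+1) * Taux k + (k.factorial : ℤ) := by
  unfold Taux
  rw [Finset.sum_Icc_succ_top (by omega : 1 ≤ k+1)]
  have h1 : (k+1).factorial / (k+1) = k.factorial := by
    rw [Nat.factorial_succ, Nat.mul_div_cancel_left _ (by omega)]
  rw [h1, Finset.mul_sum]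
  congr 1
  refine Finset.sum_congr rfl fun i hi => ?_
  rw [Finset.mem_Icc] at hi
  have hdvd : i ∣ k.factorial := Nat.dvd_factorial (by omega) hi.2
  rw [Nat.factorial_succ, Nat.mul_div_assoc _ hdvd]
  push_cast
  ring

lemma Qaux_coeff_sub (d : ℤ) (k : ℕ) :
    (Qaux d (k+1)).coeff k = d * Taux (k+1) - 2 * (k+1) * ((k+1).factorial : ℤ) := by
  induction k with
  | zero =>
    simp [Qaux, Taux, Finset.Icc_self]
  | succ k ih =>
    rw [Qaux_succ, coeff_mul_linear, ih, Qaux_coeff_top, Taux_succ (k+1),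
      Nat.factorial_succ (k+1)]
    push_cast
    ring

theorem deg_flex_locus (n : ℕ) (d : ℤ) (hn : 2 ≤ n) (hd : (n : ℤ) ≤ d) :
    degFlex n d (n + 1) =
      d ^ 2 * ∑ i ∈ Finset.Icc 1 n, ((n.factorial / i : ℕ) : ℤ) - d * (n + 1).factorial := by
  obtain ⟨p, rfl⟩ : ∃ p, n = p + 2 := ⟨n - 2, by omega⟩
  have hIcc : Finset.Icc (p + 2 - 1) (p + 2 + 1 - 1) = {p + 1, p + 2} := by
    ext a
    simp only [Finset.mem_Icc, Finset.mem_insert, Finset.mem_singleton]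
    omega
  have hflex : ∀ m, (flexPoly d (p + 2 + 1)).coeff m = d * (Qaux d (p + 2)).coeff m := by
    intro m
    unfold flexPoly Qaux
    simp [Polynomial.coeff_C_mul]
  have hT : Taux (p+2) = ∑ i ∈ Finset.Icc 1 (p+2), (((p+2).factorial / i : ℕ) : ℤ) := rfl
  unfold degFlex
  rw [hIcc, Finset.sum_insert (by simp), Finset.sum_singleton, hflex, hflex]
  have h1 : (Qaux d (p+2)).coeff (p+1) = d * Taux (p+2) - 2 * (p+2) * ((p+2).factorial : ℤ) := by
    have := Qaux_coeff_sub d (p+1)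
    convert this using 3
    push_cast; ring
  rw [h1, Qaux_coeff_top, ← hT]
  have hc1 : (p+1).choose (p+2-1) = 1 := by
    simp [Nat.choose_self]
  have hc2 : (p+1).choose (p+2) = 0 := Nat.choose_eq_zero_of_lt (by omega)
  have hc3 : (p+2).choose (p+2-1) = p+2 := by
    have : p + 2 - 1 = p + 1 := by omega
    rw [this, Nat.choose_succ_self_right]
  have hc4 : (p+2).choose (p+2) = 1 := Nat.choose_self _
  rw [hc1, hc2, hc3, hc4]
  have hfact : ((p + 2 + 1).factorial : ℤ) = (p+3) * ((p+2).factorial : ℤ) := by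
    rw [Nat.factorial_succ]; push_cast; ring
  rw [hfact]
  push_cast
  ring
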